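/- arXiv:2506.03889 — 2 statements merged into one kernel-verified Lean document; each statement's English description precedes it below -/
import Mathlib

section
/- Let a < b be real numbers, let g : ℝ → ℝ be continuously differentiable on [a,b], and suppose there are reals g_min < g_max with g_min < g(s) < g_max for all s ∈ [a,b]. If for some positive natural number n the total variation ∫_a^b |g'(s)| ds > 2·n·(g_max − g_min), then there exist n distinct points in [a,b] at which g has a local maximum (with respect to [a,b]) and n distinct points in [a,b] at which g has a local minimum (with respect to [a,b]). -/
open Set Filter MeasureTheory

/-- If `g` has positive derivative at `p` and `p < q`, there is `x ∈ (p,q)` with `g p < g x`. -/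
lemma bl_slope_right {g : ℝ → ℝ} {p q d : ℝ} (h : HasDerivAt g d p) (hd : 0 < d)
    (hpq : p < q) : ∃ x ∈ Set.Ioo p q, g p < g x := by
  rw [hasDerivAt_iff_tendsto_slope] at h
  have h2 : Filter.Tendsto (slope g p) (nhdsWithin p (Set.Ioi p)) (nhds d) :=
    h.mono_left (nhdsWithin_mono p fun x hx => ne_of_gt hx)
  have h3 : ∀ᶠ x in nhdsWithin p (Set.Ioi p), 0 < slope g p x :=
    h2.eventually (eventually_gt_nhds hd)
  have h4 : ∀ᶠ x in nhdsWithin p (Set.Ioi p), x ∈ Set.Ioo p q :=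
    Filter.eventually_of_mem (Ioo_mem_nhdsGT_of_mem ⟨le_refl p, hpq⟩) fun x hx => hx
  obtain ⟨x, hx0, hx1⟩ := (h3.and h4).exists
  refine ⟨x, hx1, ?_⟩
  rw [slope_def_field] at hx0
  have hxp : 0 < x - p := sub_pos.mpr hx1.1
  have := mul_pos hx0 hxp
  rw [div_mul_cancel₀] at this
  · linarith
  · exact ne_of_gt hxp

/-- If `g` has negative derivative at `q` and `p < q`, there is `x ∈ (p,q)` with `g q < g x`. -/
lemma bl_slope_left {g : ℝ → ℝ} {p q d : ℝ} (h : HasDerivAt g d q) (hd : d < 0)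
    (hpq : p < q) : ∃ x ∈ Set.Ioo p q, g q < g x := by
  rw [hasDerivAt_iff_tendsto_slope] at h
  have h2 : Filter.Tendsto (slope g q) (nhdsWithin q (Set.Iio q)) (nhds d) :=
    h.mono_left (nhdsWithin_mono q fun x hx => ne_of_lt hx)
  have h3 : ∀ᶠ x in nhdsWithin q (Set.Iio q), slope g q x < 0 :=
    h2.eventually (eventually_lt_nhds hd)
  have h4 : ∀ᶠ x in nhdsWithin q (Set.Iio q), x ∈ Set.Ioo p q :=
    Filter.eventually_of_mem (Ioo_mem_nhdsLT_of_mem ⟨hpq, le_refl q⟩) fun x hx => hx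
  obtain ⟨x, hx0, hx1⟩ := (h3.and h4).exists
  refine ⟨x, hx1, ?_⟩
  rw [slope_def_field] at hx0
  have hxq : x - q < 0 := sub_neg.mpr hx1.2
  have := mul_pos_of_neg_of_neg hx0 hxq
  rw [div_mul_cancel₀] at this
  · linarith
  · exact ne_of_lt hxq

/-- Between a point of positive derivative and a later point of negative derivative,
there is an interior local maximum. -/
lemma bl_exists_max {g g' : ℝ → ℝ} {a b p q : ℝ}
    (hderiv : ∀ s ∈ Set.Icc a b, HasDerivAt g (g' s) s)
    (hp : p ∈ Set.Icc a b) (hq : q ∈ Set.Icc a b) (hpq : p < q)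
    (hp' : 0 < g' p) (hq' : g' q < 0) :
    ∃ m ∈ Set.Ioo p q, IsLocalMaxOn g (Set.Icc a b) m := by
  have hsub : Set.Icc p q ⊆ Set.Icc a b := Set.Icc_subset_Icc hp.1 hq.2
  have hcg : ContinuousOn g (Set.Icc p q) := fun x hx =>
    ((hderiv x (hsub hx)).continuousAt).continuousWithinAt
  obtain ⟨m, hm, hmax⟩ := isCompact_Icc.exists_isMaxOn (Set.nonempty_Icc.mpr hpq.le) hcg
  obtain ⟨x1, hx1, hgx1⟩ := bl_slope_right (hderiv p hp) hp' hpq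
  obtain ⟨x2, hx2, hgx2⟩ := bl_slope_left (hderiv q hq) hq' hpq
  have h1 : g x1 ≤ g m := hmax (Set.Ioo_subset_Icc_self hx1)
  have h2 : g x2 ≤ g m := hmax (Set.Ioo_subset_Icc_self hx2)
  have hmp : m ≠ p := by intro h; rw [h] at h1; linarith
  have hmq : m ≠ q := by intro h; rw [h] at h2; linarith
  have hm' : m ∈ Set.Ioo p q :=
    ⟨lt_of_le_of_ne hm.1 (Ne.symm hmp), lt_of_le_of_ne hm.2 hmq⟩
  refine ⟨m, hm', ?_⟩
  have hmem : Set.Ioo p q ∈ nhdsWithin m (Set.Icc a b) :=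
    mem_nhdsWithin_of_mem_nhds (isOpen_Ioo.mem_nhds hm')
  exact Filter.eventually_of_mem hmem fun x hx => hmax (Set.Ioo_subset_Icc_self hx)

/-- Between a point of negative derivative and a later point of positive derivative,
there is an interior local minimum. -/
lemma bl_exists_min {g g' : ℝ → ℝ} {a b p q : ℝ}
    (hderiv : ∀ s ∈ Set.Icc a b, HasDerivAt g (g' s) s)
    (hp : p ∈ Set.Icc a b) (hq : q ∈ Set.Icc a b) (hpq : p < q)
    (hp' : g' p < 0) (hq' : 0 < g' q) :
    ∃ m ∈ Set.Ioo p q, IsLocalMinOn g (Set.Icc a b) m := by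
  have hderiv' : ∀ s ∈ Set.Icc a b, HasDerivAt (fun x => -g x) (-g' s) s :=
    fun s hs => (hderiv s hs).neg
  obtain ⟨m, hm, hmax⟩ := bl_exists_max hderiv' hp hq hpq (by linarith) (by linarith)
  exact ⟨m, hm, hmax.mono fun x hx => by simpa using hx⟩

/-- If the integral of `|g'|` on `[u,v]` exceeds `g v - g u`, then `g'` is somewhere
negative on `[u,v]`. -/
lemma bl_exists_deriv_neg {g g' : ℝ → ℝ} {a b u v : ℝ}
    (hderiv : ∀ s ∈ Set.Icc a b, HasDerivAt g (g' s) s)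
    (hcont : ContinuousOn g' (Set.Icc a b))
    (hu : u ∈ Set.Icc a b) (hv : v ∈ Set.Icc a b) (huv : u ≤ v)
    (hgt : g v - g u < ∫ s in u..v, |g' s|) :
    ∃ x ∈ Set.Icc u v, g' x < 0 := by
  by_contra hcon
  push_neg at hcon
  have hsub : Set.uIcc u v ⊆ Set.Icc a b := Set.uIcc_subset_Icc hu hv
  have hii : IntervalIntegrable g' MeasureTheory.volume u v :=
    (hcont.mono hsub).intervalIntegrable
  have hftc : ∫ s in u..v, g' s = g v - g u :=
    intervalIntegral.integral_eq_sub_of_hasDerivAt (fun x hx => hderiv x (hsub hx)) hii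
  have heq : ∫ s in u..v, |g' s| = ∫ s in u..v, g' s := by
    apply intervalIntegral.integral_congr
    intro x hx
    rw [Set.uIcc_of_le huv] at hx
    exact abs_of_nonneg (hcon x hx)
  rw [heq, hftc] at hgt
  exact lt_irrefl _ hgt

/-- If the integral of `|g'|` on `[u,v]` exceeds `g u - g v`, then `g'` is somewhere
positive on `[u,v]`. -/
lemma bl_exists_deriv_pos {g g' : ℝ → ℝ} {a b u v : ℝ}
    (hderiv : ∀ s ∈ Set.Icc a b, HasDerivAt g (g' s) s)
    (hcont : ContinuousOn g' (Set.Icc a b))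
    (hu : u ∈ Set.Icc a b) (hv : v ∈ Set.Icc a b) (huv : u ≤ v)
    (hgt : g u - g v < ∫ s in u..v, |g' s|) :
    ∃ x ∈ Set.Icc u v, 0 < g' x := by
  have hderiv' : ∀ s ∈ Set.Icc a b, HasDerivAt (fun x => -g x) (-g' s) s :=
    fun s hs => (hderiv s hs).neg
  have hcont' : ContinuousOn (fun s => -g' s) (Set.Icc a b) := hcont.neg
  have habs : (∫ s in u..v, |(-g' s)|) = ∫ s in u..v, |g' s| := by
    apply intervalIntegral.integral_congr
    intro x _
    exact abs_neg _
  obtain ⟨x, hx, hx'⟩ := bl_exists_deriv_neg hderiv' hcont' hu hv huv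
    (by rw [habs]; show -g v - -g u < _; linarith)
  exact ⟨x, hx, by linarith⟩

/-- **Lemma A.12 (boundedLine).**
If `g` is continuously differentiable on `[a,b]`, bounded strictly between `g_min` and
`g_max` there, and its total variation `∫ |g'|` on `[a,b]` exceeds `2 n (g_max - g_min)`,
then `g` has at least `n` local maxima and `n` local minima on `[a,b]`
(local with respect to the set `[a,b]`). -/
theorem bounded_line_many_extrema
    (a b : ℝ) (hab : a < b) (g g' : ℝ → ℝ)
    (hderiv : ∀ s ∈ Set.Icc a b, HasDerivAt g (g' s) s)
    (hcont : ContinuousOn g' (Set.Icc a b))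
    (g_min g_max : ℝ) (hminmax : g_min < g_max)
    (hbound : ∀ s ∈ Set.Icc a b, g_min < g s ∧ g s < g_max)
    (n : ℕ) (hn : 0 < n)
    (hvar : (2 : ℝ) * n * (g_max - g_min) < ∫ s in a..b, |g' s|) :
    ∃ (maxs mins : Finset ℝ),
      maxs.card = n ∧ mins.card = n ∧
      (∀ s ∈ maxs, s ∈ Set.Icc a b ∧ IsLocalMaxOn g (Set.Icc a b) s) ∧
      (∀ s ∈ mins, s ∈ Set.Icc a b ∧ IsLocalMinOn g (Set.Icc a b) s) := by
  classical
  set D := g_max - g_min with hDdef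
  have hD : 0 < D := sub_pos.mpr hminmax
  have hmema : a ∈ Set.Icc a b := ⟨le_refl a, hab.le⟩
  have hmemb : b ∈ Set.Icc a b := ⟨hab.le, le_refl b⟩
  have habs : ContinuousOn (fun s => |g' s|) (Set.Icc a b) := hcont.abs
  have hii : ∀ u v : ℝ, u ∈ Set.Icc a b → v ∈ Set.Icc a b →
      IntervalIntegrable (fun s => |g' s|) MeasureTheory.volume u v := fun u v hu hv =>
    (habs.mono (Set.uIcc_subset_Icc hu hv)).intervalIntegrable
  set P : ℝ → ℝ := fun t => ∫ s in a..t, |g' s| with hP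
  have hcontP : ContinuousOn P (Set.Icc a b) := by
    have := intervalIntegral.continuousOn_primitive_interval' (hii a b hmema hmemb)
      Set.left_mem_uIcc
    rwa [Set.uIcc_of_le hab.le] at this
  have hadd : ∀ u v : ℝ, u ∈ Set.Icc a b → v ∈ Set.Icc a b →
      P v - P u = ∫ s in u..v, |g' s| := by
    intro u v hu hv
    have h1 := intervalIntegral.integral_add_adjacent_intervals
      (hii a u hmema hu) (hii u v hu hv)
    rw [hP]
    simp only
    linarith
  have hnn : ∀ u v : ℝ, u ≤ v → 0 ≤ ∫ s in u..v, |g' s| := fun u v huv =>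
    intervalIntegral.integral_nonneg huv fun x _ => abs_nonneg _
  have hmono : ∀ u v : ℝ, u ∈ Set.Icc a b → v ∈ Set.Icc a b → u ≤ v → P u ≤ P v := by
    intro u v hu hv huv
    have := hadd u v hu hv
    have := hnn u v huv
    linarith
  have hPa : P a = 0 := by rw [hP]; simp
  set k := 2 * n with hk
  have hk2 : 2 ≤ k := by omega
  have hPb : (k : ℝ) * D < P b := by
    rw [hP]
    have : ((k : ℕ) : ℝ) = 2 * (n : ℝ) := by rw [hk]; push_cast; ring
    rw [this]
    exact hvar
  -- points T i with P (T i) = i * D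
  have hexT : ∀ i : ℕ, ∃ t, t ∈ Set.Icc a b ∧ P t = (min i (k - 1) : ℕ) * D := by
    intro i
    have hle : ((min i (k - 1) : ℕ) : ℝ) ≤ (k : ℝ) := by
      have : min i (k - 1) ≤ k := le_trans (min_le_right _ _) (Nat.sub_le k 1)
      exact_mod_cast this
    have h1 : ((min i (k - 1) : ℕ) : ℝ) * D ∈ Set.Icc (P a) (P b) := by
      constructor
      · rw [hPa]; positivity
      · nlinarith
    obtain ⟨t, ht, hPt⟩ := intermediate_value_Icc hab.le hcontP h1
    exact ⟨t, ht, hPt⟩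
  choose T hTmem hTP using hexT
  set E : ℕ → ℝ := fun i => if i ≤ k - 1 then T i else b with hE
  have hEmem : ∀ i, E i ∈ Set.Icc a b := by
    intro i
    rw [hE]
    by_cases h : i ≤ k - 1
    · simpa [h] using hTmem i
    · simpa [h] using hmemb
  have hEP : ∀ i, i < k → P (E i) = (i : ℝ) * D := by
    intro i hik
    have h : i ≤ k - 1 := by omega
    have hmin : min i (k - 1) = i := min_eq_left h
    rw [hE]
    simp only [h, if_true]
    rw [hTP i, hmin]
  have hEk : E k = b := by
    rw [hE]
    simp only
    rw [if_neg (by omega)]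
  have hEPlt : ∀ i j : ℕ, i < j → j ≤ k → P (E i) < P (E j) := by
    intro i j hij hjk
    have hik : i < k := lt_of_lt_of_le hij hjk
    have hijR : (i : ℝ) < (j : ℝ) := by exact_mod_cast hij
    have hjkR : ((j : ℕ) : ℝ) ≤ (k : ℝ) := by exact_mod_cast hjk
    rcases eq_or_lt_of_le hjk with h | h
    · rw [h, hEk, hEP i hik]
      nlinarith
    · rw [hEP i hik, hEP j h]
      nlinarith
  have hElt : ∀ i j : ℕ, i < j → j ≤ k → E i < E j := by
    intro i j hij hjk
    by_contra hcon
    push_neg at hcon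
    have := hmono (E j) (E i) (hEmem j) (hEmem i) hcon
    have := hEPlt i j hij hjk
    linarith
  have hEle : ∀ i j : ℕ, i ≤ j → j ≤ k → E i ≤ E j := by
    intro i j hij hjk
    rcases eq_or_lt_of_le hij with h | h
    · rw [h]
    · exact (hElt i j h hjk).le
  have hEint : ∀ i : ℕ, i < k → D ≤ ∫ s in (E i)..(E (i + 1)), |g' s| := by
    intro i hik
    have hiff := hadd (E i) (E (i + 1)) (hEmem i) (hEmem (i + 1))
    rcases lt_or_eq_of_le (Nat.succ_le_of_lt hik) with h | h
    · rw [hEP i hik, hEP (i + 1) h] at hiff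
      push_cast at hiff
      linarith
    · have h' : i + 1 = k := h
      have hieq : (i : ℝ) = (k : ℝ) - 1 := by
        have : (i : ℝ) + 1 = (k : ℝ) := by exact_mod_cast h'
        linarith
      have hPE1 : P (E (i + 1)) = P b := by rw [h', hEk]
      rw [hEP i hik, hPE1] at hiff
      have hiD : (i : ℝ) * D = (k : ℝ) * D - D := by rw [hieq]; ring
      linarith
  -- each subinterval contains a point of positive and a point of negative derivative
  have hEsub : ∀ i : ℕ, i < k → Set.Icc (E i) (E (i + 1)) ⊆ Set.Icc a b := by
    intro i _
    exact Set.Icc_subset_Icc (hEmem i).1 (hEmem (i + 1)).2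
  have hsign : ∀ i : ℕ, i < k →
      (∃ p ∈ Set.Icc (E i) (E (i + 1)), 0 < g' p) ∧
      (∃ q ∈ Set.Icc (E i) (E (i + 1)), g' q < 0) := by
    intro i hik
    have hle : E i ≤ E (i + 1) := hEle i (i + 1) (Nat.le_succ i) (Nat.succ_le_of_lt hik)
    have hb1 := hbound (E i) (hEmem i)
    have hb2 := hbound (E (i + 1)) (hEmem (i + 1))
    have hint := hEint i hik
    constructor
    · exact bl_exists_deriv_pos hderiv hcont (hEmem i) (hEmem (i + 1)) hle
        (by rw [hDdef] at hint; linarith)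
    · exact bl_exists_deriv_neg hderiv hcont (hEmem i) (hEmem (i + 1)) hle
        (by rw [hDdef] at hint; linarith)
  -- local maxima
  have hmaxj : ∀ j : ℕ, ∃ m, j < n →
      m ∈ Set.Ioo (E (2 * j)) (E (2 * j + 2)) ∧ IsLocalMaxOn g (Set.Icc a b) m := by
    intro j
    by_cases hjn : j < n
    · have h1 : 2 * j < k := by omega
      have h2 : 2 * j + 1 < k := by omega
      obtain ⟨p, hpmem, hppos⟩ := (hsign (2 * j) h1).1
      obtain ⟨q, hqmem, hqneg⟩ := (hsign (2 * j + 1) h2).2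
      have hpab : p ∈ Set.Icc a b := hEsub (2 * j) h1 hpmem
      have hqab : q ∈ Set.Icc a b := hEsub (2 * j + 1) h2 hqmem
      have hpq : p < q := by
        rcases lt_or_eq_of_le (le_trans hpmem.2 hqmem.1) with h | h
        · exact h
        · exfalso; rw [h] at hppos; linarith
      obtain ⟨m, hm, hmax⟩ := bl_exists_max hderiv hpab hqab hpq hppos hqneg
      refine ⟨m, fun _ => ⟨⟨lt_of_le_of_lt hpmem.1 hm.1, lt_of_lt_of_le hm.2 ?_⟩, hmax⟩⟩
      have : 2 * j + 1 + 1 = 2 * j + 2 := by ring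
      rw [← this]
      exact hqmem.2
    · exact ⟨a, fun h => absurd h hjn⟩
  have hminj : ∀ j : ℕ, ∃ m, j < n →
      m ∈ Set.Ioo (E (2 * j)) (E (2 * j + 2)) ∧ IsLocalMinOn g (Set.Icc a b) m := by
    intro j
    by_cases hjn : j < n
    · have h1 : 2 * j < k := by omega
      have h2 : 2 * j + 1 < k := by omega
      obtain ⟨q, hqmem, hqneg⟩ := (hsign (2 * j) h1).2
      obtain ⟨p, hpmem, hppos⟩ := (hsign (2 * j + 1) h2).1
      have hqab : q ∈ Set.Icc a b := hEsub (2 * j) h1 hqmem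
      have hpab : p ∈ Set.Icc a b := hEsub (2 * j + 1) h2 hpmem
      have hqp : q < p := by
        rcases lt_or_eq_of_le (le_trans hqmem.2 hpmem.1) with h | h
        · exact h
        · exfalso; rw [h] at hqneg; linarith
      obtain ⟨m, hm, hmin⟩ := bl_exists_min hderiv hqab hpab hqp hqneg hppos
      refine ⟨m, fun _ => ⟨⟨lt_of_le_of_lt hqmem.1 hm.1, lt_of_lt_of_le hm.2 ?_⟩, hmin⟩⟩
      have : 2 * j + 1 + 1 = 2 * j + 2 := by ring
      rw [← this]
      exact hpmem.2
    · exact ⟨a, fun h => absurd h hjn⟩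
  choose M hM using hmaxj
  choose N hN using hminj
  -- injectivity on range n
  have hMN_sep : ∀ (F : ℕ → ℝ), (∀ j, j < n → F j ∈ Set.Ioo (E (2 * j)) (E (2 * j + 2))) →
      Set.InjOn F (Finset.range n) := by
    intro F hF
    have key : ∀ j1 j2 : ℕ, j1 < n → j2 < n → j1 < j2 → F j1 < F j2 := by
      intro j1 j2 h1 h2 h12
      have ha1 := hF j1 h1
      have ha2 := hF j2 h2
      have hle : E (2 * j1 + 2) ≤ E (2 * j2) := hEle (2 * j1 + 2) (2 * j2)
        (by omega) (by omega)
      calc F j1 < E (2 * j1 + 2) := ha1.2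
        _ ≤ E (2 * j2) := hle
        _ < F j2 := ha2.1
    intro j1 hj1 j2 hj2 heq
    simp only [Finset.coe_range, Set.mem_Iio] at hj1 hj2
    rcases lt_trichotomy j1 j2 with h | h | h
    · exact absurd heq (ne_of_lt (key j1 j2 hj1 hj2 h))
    · exact h
    · exact absurd heq.symm (ne_of_lt (key j2 j1 hj2 hj1 h))
  have hMinj : Set.InjOn M (Finset.range n) :=
    hMN_sep M fun j hj => (hM j hj).1
  have hNinj : Set.InjOn N (Finset.range n) :=
    hMN_sep N fun j hj => (hN j hj).1
  refine ⟨(Finset.range n).image M, (Finset.range n).image N, ?_, ?_, ?_, ?_⟩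
  · rw [Finset.card_image_of_injOn hMinj, Finset.card_range]
  · rw [Finset.card_image_of_injOn hNinj, Finset.card_range]
  · intro s hs
    obtain ⟨j, hj, rfl⟩ := Finset.mem_image.mp hs
    have hjn : j < n := Finset.mem_range.mp hj
    obtain ⟨hmem, hmax⟩ := hM j hjn
    refine ⟨⟨le_trans (hEmem (2 * j)).1 hmem.1.le, le_trans hmem.2.le (hEmem (2 * j + 2)).2⟩, hmax⟩
  · intro s hs
    obtain ⟨j, hj, rfl⟩ := Finset.mem_image.mp hs
    have hjn : j < n := Finset.mem_range.mp hj
    obtain ⟨hmem, hmin⟩ := hN j hjn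
    refine ⟨⟨le_trans (hEmem (2 * j)).1 hmem.1.le, le_trans hmem.2.le (hEmem (2 * j + 2)).2⟩, hmin⟩
end

section
/- Let N ≥ 1, let L : ℝ^N → ℝ be continuously differentiable, and let θ₁ ≠ θ₂ be points of ℝ^N. Suppose there are reals m < M with m < L(θ₁ + t(θ₂ − θ₁)) < M for all t ∈ [0,1], and for some positive natural number n, ∫_0^1 |⟨∇L(θ₁ + t(θ₂ − θ₁)), θ₂ − θ₁⟩| dt > 2·n·(M − m). Then the function g(t) = L(θ₁ + t(θ₂ − θ₁)) on [0,1] has at least n distinct local maximum points and n distinct local minimum points in [0,1]. -/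
open scoped RealInnerProductSpace
open Set MeasureTheory intervalIntegral Filter

set_option maxHeartbeats 4000000

/-- In a compact interval, if some point beats the value at each endpoint,
then there is an interior point which is a local max (on any ambient set). -/
private lemma argmax_interior (g : ℝ → ℝ) (hg : Continuous g) {a b za zb : ℝ}
    (hza : za ∈ Set.Icc a b) (hzb : zb ∈ Set.Icc a b)
    (ha : g a < g za) (hb : g b < g zb) (S : Set ℝ) :
    ∃ q ∈ Set.Ioo a b, IsLocalMaxOn g S q := by
  have hab : a ≤ b := hza.1.trans hza.2
  obtain ⟨q, hqm, hq⟩ := (isCompact_Icc (a := a) (b := b)).exists_isMaxOn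
    (Set.nonempty_Icc.2 hab) hg.continuousOn
  have hqa : a < q := by
    rcases eq_or_lt_of_le hqm.1 with h | h
    · exfalso; have h5 : g za ≤ g q := hq hza; rw [← h] at h5; linarith
    · exact h
  have hqb : q < b := by
    rcases eq_or_lt_of_le hqm.2 with h | h
    · exfalso; have h5 : g zb ≤ g q := hq hzb; rw [h] at h5; linarith
    · exact h
  refine ⟨q, ⟨hqa, hqb⟩, ?_⟩
  have hmem : Set.Icc a b ∈ nhds q := Icc_mem_nhds hqa hqb
  exact Filter.Eventually.filter_mono nhdsWithin_le_nhds
    (Filter.eventually_of_mem hmem fun x hx => hq hx)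

private lemma argmin_interior (g : ℝ → ℝ) (hg : Continuous g) {a b za zb : ℝ}
    (hza : za ∈ Set.Icc a b) (hzb : zb ∈ Set.Icc a b)
    (ha : g za < g a) (hb : g zb < g b) (S : Set ℝ) :
    ∃ q ∈ Set.Ioo a b, IsLocalMinOn g S q := by
  obtain ⟨q, hqm, hq⟩ := argmax_interior (fun x => -g x) hg.neg hza hzb
    (by simpa using ha) (by simpa using hb) S
  exact ⟨q, hqm, hq.mono fun x hx => by simpa using hx⟩

/-- Left-boundary version: a minimizer of `g` on `[0, b]` which is not `b`
is a local min on `[0,1]`. -/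
private lemma argmin_left (g : ℝ → ℝ) (hg : Continuous g) {b z : ℝ}
    (hz : z ∈ Set.Icc 0 b) (hzb : g z < g b) :
    ∃ q ∈ Set.Ico (0 : ℝ) b, IsLocalMinOn g (Set.Icc (0 : ℝ) 1) q := by
  have hb : (0 : ℝ) ≤ b := hz.1.trans hz.2
  obtain ⟨q, hqm, hq⟩ := (isCompact_Icc (a := (0:ℝ)) (b := b)).exists_isMinOn
    (Set.nonempty_Icc.2 hb) hg.continuousOn
  have hqb : q < b := by
    rcases eq_or_lt_of_le hqm.2 with h | h
    · exfalso; have h5 : g q ≤ g z := hq hz; rw [h] at h5; linarith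
    · exact h
  refine ⟨q, ⟨hqm.1, hqb⟩, ?_⟩
  have h1 : ∀ᶠ x in nhdsWithin q (Set.Icc (0:ℝ) 1), x ∈ Set.Icc (0:ℝ) 1 :=
    eventually_mem_nhdsWithin
  have h2 : ∀ᶠ x in nhdsWithin q (Set.Icc (0:ℝ) 1), x < b :=
    Filter.Eventually.filter_mono nhdsWithin_le_nhds
      (Filter.eventually_of_mem (Iio_mem_nhds hqb) fun x hx => hx)
  filter_upwards [h1, h2] with x hx1 hx2
  exact hq ⟨hx1.1, hx2.le⟩

/-- If the integral of `|g'|` over `[c, c']` exceeds the oscillation bound `Δ'`,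
then `g` has a strict rise inside `[c, c']`. -/
private lemma exists_rise (g φ : ℝ → ℝ) (hφ : Continuous φ)
    (hd : ∀ t, HasDerivAt g (φ t) t) {c c' Δ' : ℝ} (hcc : c < c')
    (hosc : ∀ x ∈ Set.Icc c c', ∀ y ∈ Set.Icc c c', g x - g y ≤ Δ')
    (hint : Δ' < ∫ t in c..c', |φ t|) :
    ∃ x y, c ≤ x ∧ x < y ∧ y ≤ c' ∧ g x < g y := by
  by_contra hcon
  push_neg at hcon
  -- hcon : ∀ x y, c ≤ x → x < y → y ≤ c' → g y ≤ g x
  have hno : ∀ t ∈ Set.Ioo c c', φ t ≤ 0 := by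
    intro t ht
    by_contra hpos
    push_neg at hpos
    have hU : IsOpen (φ ⁻¹' Set.Ioi (0:ℝ) ∩ Set.Ioo c c') :=
      (isOpen_Ioi.preimage hφ).inter isOpen_Ioo
    have htU : t ∈ φ ⁻¹' Set.Ioi (0:ℝ) ∩ Set.Ioo c c' := ⟨hpos, ht⟩
    obtain ⟨ε, hε, hball⟩ := Metric.isOpen_iff.mp hU t htU
    set y := t + ε / 2 with hy
    have hty : t < y := by simp [hy]; linarith
    have hymem : y ∈ φ ⁻¹' Set.Ioi (0:ℝ) ∩ Set.Ioo c c' := by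
      apply hball
      rw [Metric.mem_ball, Real.dist_eq, hy, show t + ε/2 - t = ε/2 by ring,
        abs_of_nonneg (by linarith : (0:ℝ) ≤ ε/2)]
      linarith
    have hpos' : ∀ s ∈ Set.Ioo t y, 0 < φ s := by
      intro s hs
      have : s ∈ Metric.ball t ε := by
        rw [Metric.mem_ball, Real.dist_eq,
          abs_of_nonneg (by linarith [hs.1] : (0:ℝ) ≤ s - t)]
        have := hs.2
        rw [hy] at this
        linarith
      exact (hball this).1
    have hftc : ∫ s in t..y, φ s = g y - g t :=
      intervalIntegral.integral_eq_sub_of_hasDerivAt (fun x _ => hd x)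
        (hφ.intervalIntegrable t y)
    have hpos'' : 0 < ∫ s in t..y, φ s :=
      intervalIntegral.intervalIntegral_pos_of_pos_on
        (hφ.intervalIntegrable t y) hpos' hty
    have : g y ≤ g t := hcon t y ht.1.le hty hymem.2.2.le
    rw [hftc] at hpos''
    linarith
  have habs : ∀ᵐ s : ℝ, s ∈ Set.uIoc c c' → |φ s| = -φ s := by
    have hsing : (volume : Measure ℝ) {c'} = 0 := measure_singleton c'
    filter_upwards [measure_eq_zero_iff_ae_notMem.mp hsing] with s hs hmem
    rw [Set.uIoc_of_le hcc.le] at hmem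
    have hsne : s ≠ c' := by simpa using hs
    exact abs_of_nonpos (hno s ⟨hmem.1, lt_of_le_of_ne hmem.2 hsne⟩)
  have heq : ∫ t in c..c', |φ t| = ∫ t in c..c', -φ t :=
    intervalIntegral.integral_congr_ae habs
  have hftc : ∫ t in c..c', φ t = g c' - g c :=
    intervalIntegral.integral_eq_sub_of_hasDerivAt (fun x _ => hd x)
      (hφ.intervalIntegrable c c')
  rw [heq, intervalIntegral.integral_neg, hftc] at hint
  have := hosc c ⟨le_refl c, hcc.le⟩ c' ⟨hcc.le, le_refl c'⟩
  linarith

private lemma exists_fall (g φ : ℝ → ℝ) (hφ : Continuous φ)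
    (hd : ∀ t, HasDerivAt g (φ t) t) {c c' Δ' : ℝ} (hcc : c < c')
    (hosc : ∀ x ∈ Set.Icc c c', ∀ y ∈ Set.Icc c c', g x - g y ≤ Δ')
    (hint : Δ' < ∫ t in c..c', |φ t|) :
    ∃ x y, c ≤ x ∧ x < y ∧ y ≤ c' ∧ g y < g x := by
  have h := exists_rise (fun x => -g x) (fun x => -φ x) hφ.neg
    (fun t => (hd t).neg) hcc
    (fun x hx y hy => by have := hosc y hy x hx; show -g x - -g y ≤ Δ'; linarith)
    (by simpa using hint)
  obtain ⟨x, y, h1, h2, h3, h4⟩ := h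
  exact ⟨x, y, h1, h2, h3, by simpa using h4⟩

/-- **Theorem A.13 (loss landscape roughness), core statement.**
If the loss `L : ℝ^N → ℝ` is `C¹`, stays strictly between `m` and `M` along the segment
from `θ₁` to `θ₂`, and the integral over `[0,1]` of the absolute projected gradient
`|⟪∇L(θ₁ + t(θ₂ - θ₁)), θ₂ - θ₁⟫|` exceeds `2 n (M - m)`, then the restriction
`g(t) = L(θ₁ + t(θ₂ - θ₁))` has at least `n` local maximum points and `n` local minimum
points in `[0,1]` (local with respect to `[0,1]`). -/
theorem loss_landscape_roughness
    (N : ℕ) (hN : 1 ≤ N)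
    (L : EuclideanSpace ℝ (Fin N) → ℝ) (hL : ContDiff ℝ 1 L)
    (θ₁ θ₂ : EuclideanSpace ℝ (Fin N)) (hθ : θ₁ ≠ θ₂)
    (m M : ℝ) (hmM : m < M)
    (hbound : ∀ t ∈ Set.Icc (0 : ℝ) 1,
      m < L (θ₁ + t • (θ₂ - θ₁)) ∧ L (θ₁ + t • (θ₂ - θ₁)) < M)
    (n : ℕ) (hn : 0 < n)
    (hvar : (2 : ℝ) * n * (M - m) <
      ∫ t in (0 : ℝ)..1, |⟪gradient L (θ₁ + t • (θ₂ - θ₁)), θ₂ - θ₁⟫|) :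
    ∃ (maxs mins : Finset ℝ),
      maxs.card = n ∧ mins.card = n ∧
      (∀ t ∈ maxs, t ∈ Set.Icc (0 : ℝ) 1 ∧
        IsLocalMaxOn (fun s : ℝ => L (θ₁ + s • (θ₂ - θ₁))) (Set.Icc (0 : ℝ) 1) t) ∧
      (∀ t ∈ mins, t ∈ Set.Icc (0 : ℝ) 1 ∧
        IsLocalMinOn (fun s : ℝ => L (θ₁ + s • (θ₂ - θ₁))) (Set.Icc (0 : ℝ) 1) t) := by
  classical
  set g : ℝ → ℝ := fun s => L (θ₁ + s • (θ₂ - θ₁)) with hgdef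
  set φ : ℝ → ℝ := fun t => ⟪gradient L (θ₁ + t • (θ₂ - θ₁)), θ₂ - θ₁⟫ with hφdef
  have hLd : Differentiable ℝ L := hL.differentiable one_ne_zero
  have hgd : ∀ t : ℝ, HasDerivAt g (φ t) t := by
    intro t
    have h1 : HasDerivAt (fun s : ℝ => θ₁ + s • (θ₂ - θ₁)) (θ₂ - θ₁) t := by
      simpa using ((hasDerivAt_id t).smul_const (θ₂ - θ₁)).const_add θ₁
    have h2 := (hLd (θ₁ + t • (θ₂ - θ₁))).hasFDerivAt.comp_hasDerivAt t h1
    have h3 : φ t = fderiv ℝ L (θ₁ + t • (θ₂ - θ₁)) (θ₂ - θ₁) := by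
      simp only [hφdef, gradient, InnerProductSpace.toDual_symm_apply]
    rw [h3]
    exact h2
  have hgc : Continuous g := by
    have : Continuous fun s : ℝ => θ₁ + s • (θ₂ - θ₁) := by continuity
    exact hLd.continuous.comp this
  have hφc : Continuous φ := by
    have hγ : Continuous fun t : ℝ => θ₁ + t • (θ₂ - θ₁) := by continuity
    have hφeq : φ = fun t : ℝ => fderiv ℝ L (θ₁ + t • (θ₂ - θ₁)) (θ₂ - θ₁) := by
      funext t
      simp only [hφdef, gradient, InnerProductSpace.toDual_symm_apply]
    rw [hφeq]
    exact Continuous.clm_apply ((hL.continuous_fderiv one_ne_zero).comp hγ) continuous_const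
  -- oscillation bound
  obtain ⟨pmax, hpmaxm, hpmax⟩ := isCompact_Icc.exists_isMaxOn
    (Set.nonempty_Icc.2 zero_le_one) hgc.continuousOn
  obtain ⟨pmin, hpminm, hpmin⟩ := isCompact_Icc.exists_isMinOn
    (Set.nonempty_Icc.2 zero_le_one) hgc.continuousOn
  set Δ' : ℝ := g pmax - g pmin with hΔ'def
  have hΔ'lt : Δ' < M - m := by
    have h1 : g pmax < M := (hbound pmax hpmaxm).2
    have h2 : m < g pmin := (hbound pmin hpminm).1
    simp only [hΔ'def]
    linarith
  have hosc : ∀ x ∈ Set.Icc (0:ℝ) 1, ∀ y ∈ Set.Icc (0:ℝ) 1, g x - g y ≤ Δ' := by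
    intro x hx y hy
    have h1 : g x ≤ g pmax := hpmax hx
    have h2 : g pmin ≤ g y := hpmin hy
    simp only [hΔ'def]; linarith
  -- the primitive of |φ|
  set V : ℝ → ℝ := fun t => ∫ s in (0:ℝ)..t, |φ s| with hVdef
  have hVint : ∀ a b : ℝ, IntervalIntegrable (fun s => |φ s|) volume a b :=
    fun a b => (hφc.abs).intervalIntegrable a b
  have hVc : Continuous V := intervalIntegral.continuous_primitive hVint 0
  have hVadd : ∀ x y : ℝ, V x + ∫ s in x..y, |φ s| = V y := by
    intro x y
    exact intervalIntegral.integral_add_adjacent_intervals (hVint 0 x) (hVint x y)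
  have hVmono : ∀ x y : ℝ, x ≤ y → V x ≤ V y := by
    intro x y hxy
    have h1 := hVadd x y
    have h2 : 0 ≤ ∫ s in x..y, |φ s| :=
      intervalIntegral.integral_nonneg hxy fun u _ => abs_nonneg _
    linarith
  have hT : 2 * (n:ℝ) * (M - m) < V 1 := hvar
  have hV1pos : 0 < V 1 := by
    have : (0:ℝ) < 2 * n * (M - m) := by
      have : (0:ℝ) < (n:ℝ) := by exact_mod_cast hn
      nlinarith
    linarith
  set η : ℝ := V 1 / (2 * n) with hηdef
  have hn2 : (0:ℝ) < 2 * n := by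
    have : (0:ℝ) < (n:ℝ) := by exact_mod_cast hn
    linarith
  have hηpos : 0 < η := div_pos hV1pos hn2
  have hηgt : M - m < η := by
    rw [hηdef, lt_div_iff₀ hn2]
    nlinarith
  have hV0 : V 0 = 0 := intervalIntegral.integral_same
  -- choose the cut points
  have hcex : ∀ j : ℕ, ∃ x, x ∈ Set.Icc (0:ℝ) 1 ∧ (j ≤ 2*n → V x = j * η) := by
    intro j
    by_cases hj : j ≤ 2*n
    · have hmem : (j:ℝ) * η ∈ Set.Icc (V 0) (V 1) := by
        constructor
        · rw [hV0]; positivity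
        · have hjle : (j:ℝ) ≤ 2*n := by exact_mod_cast hj
          have : (j:ℝ) * η ≤ (2*n) * η := mul_le_mul_of_nonneg_right hjle hηpos.le
          calc (j:ℝ) * η ≤ (2*n:ℝ) * η := this
            _ = V 1 := by rw [hηdef]; field_simp
      obtain ⟨x, hx, hVx⟩ := intermediate_value_Icc zero_le_one hVc.continuousOn hmem
      exact ⟨x, hx, fun _ => hVx⟩
    · exact ⟨0, ⟨le_refl 0, zero_le_one⟩, fun h => absurd h hj⟩
  choose c hcm hcV using hcex
  have hclt : ∀ i j : ℕ, i < j → j ≤ 2*n → c i < c j := by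
    intro i j hij hj
    by_contra hle
    push_neg at hle
    have h1 : V (c j) ≤ V (c i) := hVmono _ _ hle
    rw [hcV i (by omega), hcV j hj] at h1
    have hij' : (i:ℝ) < j := by exact_mod_cast hij
    nlinarith
  have hcle : ∀ i j : ℕ, i ≤ j → j ≤ 2*n → c i ≤ c j := by
    intro i j hij hj
    rcases eq_or_lt_of_le hij with h | h
    · rw [h]
    · exact (hclt i j h hj).le
  have hpiece : ∀ j : ℕ, j < 2*n → ∫ t in (c j)..(c (j+1)), |φ t| = η := by
    intro j hj
    have h1 := hVadd (c j) (c (j+1))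
    rw [hcV j (by omega), hcV (j+1) (by omega)] at h1
    push_cast at h1
    linarith
  -- rise and fall in each piece
  have hRF : ∀ j : ℕ, j < 2*n →
      (∃ x y, c j ≤ x ∧ x < y ∧ y ≤ c (j+1) ∧ g x < g y) ∧
      (∃ x y, c j ≤ x ∧ x < y ∧ y ≤ c (j+1) ∧ g y < g x) := by
    intro j hj
    have hcc : c j < c (j+1) := hclt j (j+1) (by omega) (by omega)
    have hsub : Set.Icc (c j) (c (j+1)) ⊆ Set.Icc (0:ℝ) 1 := by
      intro x hx
      exact ⟨le_trans (hcm j).1 hx.1, le_trans hx.2 (hcm (j+1)).2⟩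
    have hosc' : ∀ x ∈ Set.Icc (c j) (c (j+1)), ∀ y ∈ Set.Icc (c j) (c (j+1)),
        g x - g y ≤ Δ' := fun x hx y hy => hosc x (hsub hx) y (hsub hy)
    have hint : Δ' < ∫ t in (c j)..(c (j+1)), |φ t| := by
      rw [hpiece j hj]; linarith
    exact ⟨exists_rise g φ hφc hgd hcc hosc' hint,
           exists_fall g φ hφc hgd hcc hosc' hint⟩
  -- choose rise pairs on even pieces, fall pairs on odd pieces
  have hselex : ∀ j : ℕ, ∃ a b : ℝ, j < 2*n →
      c j ≤ a ∧ a < b ∧ b ≤ c (j+1) ∧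
      (Even j → g a < g b) ∧ (¬ Even j → g b < g a) := by
    intro j
    by_cases hj : j < 2*n
    · by_cases hpar : Even j
      · obtain ⟨x, y, h1, h2, h3, h4⟩ := (hRF j hj).1
        exact ⟨x, y, fun _ => ⟨h1, h2, h3, fun _ => h4, fun h => absurd hpar h⟩⟩
      · obtain ⟨x, y, h1, h2, h3, h4⟩ := (hRF j hj).2
        exact ⟨x, y, fun _ => ⟨h1, h2, h3, fun h => absurd h hpar, fun _ => h4⟩⟩
    · exact ⟨0, 0, fun h => absurd h hj⟩
  choose α β hsel using hselex
  have hα : ∀ j, j < 2*n → c j ≤ α j := fun j hj => (hsel j hj).1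
  have hαβ : ∀ j, j < 2*n → α j < β j := fun j hj => (hsel j hj).2.1
  have hβ : ∀ j, j < 2*n → β j ≤ c (j+1) := fun j hj => (hsel j hj).2.2.1
  have hrise : ∀ j, j < 2*n → Even j → g (α j) < g (β j) :=
    fun j hj he => (hsel j hj).2.2.2.1 he
  have hfall : ∀ j, j < 2*n → ¬ Even j → g (β j) < g (α j) :=
    fun j hj he => (hsel j hj).2.2.2.2 he
  -- maxima
  have hmaxex : ∀ k : ℕ, ∃ q : ℝ, k < n →
      q ∈ Set.Ioo (α (2*k)) (β (2*k+1)) ∧ IsLocalMaxOn g (Set.Icc (0:ℝ) 1) q := by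
    intro k
    by_cases hk : k < n
    · have h2k : 2*k < 2*n := by omega
      have h2k1 : 2*k+1 < 2*n := by omega
      have he : Even (2*k) := even_two_mul k
      have ho : ¬ Even (2*k+1) := by simp [Nat.even_add_one, he]
      have hchain : β (2*k) ≤ α (2*k+1) :=
        le_trans (hβ _ h2k) (hα _ h2k1)
      have hza : β (2*k) ∈ Set.Icc (α (2*k)) (β (2*k+1)) :=
        ⟨(hαβ _ h2k).le, le_trans hchain (hαβ _ h2k1).le⟩
      have hzb : α (2*k+1) ∈ Set.Icc (α (2*k)) (β (2*k+1)) :=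
        ⟨le_trans (hαβ _ h2k).le hchain, (hαβ _ h2k1).le⟩
      obtain ⟨q, hqm, hq⟩ := argmax_interior g hgc hza hzb
        (hrise _ h2k he) (hfall _ h2k1 ho) (Set.Icc (0:ℝ) 1)
      exact ⟨q, fun _ => ⟨hqm, hq⟩⟩
    · exact ⟨0, fun h => absurd h hk⟩
  choose qmax hqmax using hmaxex
  -- interior minima (the (k+1)-st min for k+1 < n)
  have hminex : ∀ k : ℕ, ∃ r : ℝ, k + 1 < n →
      r ∈ Set.Ioo (α (2*k+1)) (β (2*k+2)) ∧ IsLocalMinOn g (Set.Icc (0:ℝ) 1) r := by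
    intro k
    by_cases hk : k + 1 < n
    · have h2k1 : 2*k+1 < 2*n := by omega
      have h2k2 : 2*k+2 < 2*n := by omega
      have ho : ¬ Even (2*k+1) := by simp [Nat.even_add_one, even_two_mul k]
      have he : Even (2*k+2) := by
        have : 2*k+2 = 2*(k+1) := by ring
        rw [this]; exact even_two_mul (k+1)
      have hchain : β (2*k+1) ≤ α (2*k+2) :=
        le_trans (hβ _ h2k1) (hα _ h2k2)
      have hza : β (2*k+1) ∈ Set.Icc (α (2*k+1)) (β (2*k+2)) :=
        ⟨(hαβ _ h2k1).le, le_trans hchain (hαβ _ h2k2).le⟩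
      have hzb : α (2*k+2) ∈ Set.Icc (α (2*k+1)) (β (2*k+2)) :=
        ⟨le_trans (hαβ _ h2k1).le hchain, (hαβ _ h2k2).le⟩
      obtain ⟨r, hrm, hr⟩ := argmin_interior g hgc hza hzb
        (hfall _ h2k1 ho) (hrise _ h2k2 he) (Set.Icc (0:ℝ) 1)
      exact ⟨r, fun _ => ⟨hrm, hr⟩⟩
    · exact ⟨0, fun h => absurd h hk⟩
  choose qmin hqmin using hminex
  -- boundary minimum in [0, β 0]
  have h02n : 0 < 2*n := by omega
  have hα0 : α 0 ∈ Set.Icc (0:ℝ) (β 0) := by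
    constructor
    · exact le_trans (hcm 0).1 (hα 0 h02n)
    · exact (hαβ 0 h02n).le
  obtain ⟨r0, hr0m, hr0⟩ := argmin_left g hgc hα0 (hrise 0 h02n (Even.zero))
  -- assemble
  set rmin : ℕ → ℝ := fun k => if k = 0 then r0 else qmin (k - 1) with hrmindef
  -- bounds used for ordering and membership
  have hq_mem : ∀ k, k < n → qmax k ∈ Set.Icc (0:ℝ) 1 := by
    intro k hk
    have h := (hqmax k hk).1
    constructor
    · exact le_trans (le_trans (hcm (2*k)).1 (hα _ (by omega))) h.1.le
    · exact le_trans h.2.le (le_trans (hβ _ (by omega)) (hcm (2*k+2)).2)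
  have hr_mem : ∀ k, k < n → rmin k ∈ Set.Icc (0:ℝ) 1 := by
    intro k hk
    rcases Nat.eq_zero_or_pos k with h0 | h0
    · subst h0
      simp only [hrmindef, if_pos rfl]
      refine ⟨hr0m.1, ?_⟩
      exact le_trans hr0m.2.le (le_trans (hβ 0 h02n) (hcm 1).2)
    · have hk1 : k - 1 + 1 < n := by omega
      have h := (hqmin (k-1) hk1).1
      have hne : k ≠ 0 := by omega
      simp only [hrmindef, if_neg hne]
      constructor
      · exact le_trans (le_trans (hcm (2*(k-1)+1)).1 (hα _ (by omega))) h.1.le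
      · exact le_trans h.2.le (le_trans (hβ _ (by omega)) (hcm (2*(k-1)+2+1)).2)
  -- strict ordering of the maxima
  have hqord : ∀ k k' : ℕ, k < k' → k' < n → qmax k < qmax k' := by
    intro k k' hkk hk'
    have hk : k < n := by omega
    have h1 := (hqmax k hk).1
    have h2 := (hqmax k' hk').1
    have hb1 : β (2*k+1) ≤ c (2*k+2) := hβ _ (by omega)
    have hc12 : c (2*k+2) ≤ c (2*k') := hcle _ _ (by omega) (by omega)
    have ha2 : c (2*k') ≤ α (2*k') := hα _ (by omega)
    calc qmax k < β (2*k+1) := h1.2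
      _ ≤ α (2*k') := le_trans hb1 (le_trans hc12 ha2)
      _ < qmax k' := h2.1
  -- strict ordering of the minima
  have hrlt : ∀ k, k < n → rmin k < β (2*k) := by
    intro k hk
    rcases Nat.eq_zero_or_pos k with h0 | h0
    · subst h0; simp only [hrmindef, if_pos rfl]; exact hr0m.2
    · have hk1 : k - 1 + 1 < n := by omega
      have h := (hqmin (k-1) hk1).1
      have hne : k ≠ 0 := by omega
      simp only [hrmindef, if_neg hne]
      have : 2*(k-1)+2 = 2*k := by omega
      rw [← this]
      exact h.2
  have hrgt : ∀ k, 0 < k → k < n → α (2*k-1) < rmin k := by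
    intro k h0 hk
    have hk1 : k - 1 + 1 < n := by omega
    have h := (hqmin (k-1) hk1).1
    have hne : k ≠ 0 := by omega
    simp only [hrmindef, if_neg hne]
    have : 2*(k-1)+1 = 2*k-1 := by omega
    rw [← this]
    exact h.1
  have hrord : ∀ k k' : ℕ, k < k' → k' < n → rmin k < rmin k' := by
    intro k k' hkk hk'
    have hk : k < n := by omega
    have h1 : rmin k < β (2*k) := hrlt k hk
    have h2 : α (2*k'-1) < rmin k' := hrgt k' (by omega) hk'
    have hb1 : β (2*k) ≤ c (2*k+1) := hβ _ (by omega)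
    have hc12 : c (2*k+1) ≤ c (2*k'-1) := hcle _ _ (by omega) (by omega)
    have ha2 : c (2*k'-1) ≤ α (2*k'-1) := hα _ (by omega)
    calc rmin k < β (2*k) := h1
      _ ≤ α (2*k'-1) := le_trans hb1 (le_trans hc12 ha2)
      _ < rmin k' := h2
  -- the Finsets
  refine ⟨(Finset.range n).image qmax, (Finset.range n).image rmin, ?_, ?_, ?_, ?_⟩
  · rw [Finset.card_image_of_injOn, Finset.card_range]
    intro k hk k' hk' heq
    simp only [Finset.coe_range, Set.mem_Iio] at hk hk'
    by_contra hne
    rcases lt_or_gt_of_ne hne with h | h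
    · exact absurd heq (ne_of_lt (hqord k k' h hk'))
    · exact absurd heq.symm (ne_of_lt (hqord k' k h hk))
  · rw [Finset.card_image_of_injOn, Finset.card_range]
    intro k hk k' hk' heq
    simp only [Finset.coe_range, Set.mem_Iio] at hk hk'
    by_contra hne
    rcases lt_or_gt_of_ne hne with h | h
    · exact absurd heq (ne_of_lt (hrord k k' h hk'))
    · exact absurd heq.symm (ne_of_lt (hrord k' k h hk))
  · intro t ht
    simp only [Finset.mem_image, Finset.mem_range] at ht
    obtain ⟨k, hk, rfl⟩ := ht
    exact ⟨hq_mem k hk, (hqmax k hk).2⟩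
  · intro t ht
    simp only [Finset.mem_image, Finset.mem_range] at ht
    obtain ⟨k, hk, rfl⟩ := ht
    refine ⟨hr_mem k hk, ?_⟩
    rcases Nat.eq_zero_or_pos k with h0 | h0
    · subst h0; simp only [hrmindef, if_pos rfl]; exact hr0
    · have hk1 : k - 1 + 1 < n := by omega
      have hne : k ≠ 0 := by omega
      simp only [hrmindef, if_neg hne]
      exact (hqmin (k-1) hk1).2
end
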